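/- Let q > 1 be a real number, let n be a natural number, and let 0 ≤ r ≤ n be an integer. Then for every complex number z, z^{n−r} = Σ_{j=0}^{n} ( z^{n−j} · ∏_{i=0}^{j-1} (q^{−i} − z)/(q^{i+1} − 1) ) · ∏_{i=0}^{j-1} (q^{r} − q^{i}), where empty products equal 1 and real factors are regarded as complex numbers. -/
import Mathlib

open Finset

noncomputable def aP (q : ℝ) (z : ℂ) (j : ℕ) : ℂ :=
  ∏ i ∈ range j, ((q : ℂ) ^ (-(i : ℤ)) - z) / ((q : ℂ) ^ (i + 1) - 1)

noncomputable def dP (q : ℝ) (r j : ℕ) : ℂ :=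
  ∏ i ∈ range j, ((q : ℂ) ^ r - (q : ℂ) ^ i)

noncomputable def tP (q : ℝ) (z : ℂ) (r j : ℕ) : ℂ :=
  z ^ (r - j) * aP q z j * dP q r j

noncomputable def sP (q : ℝ) (z : ℂ) (r j : ℕ) : ℂ :=
  (q : ℂ) ^ j * z * tP q z r j

lemma dP_succ (q : ℝ) (r j : ℕ) :
    dP q r (j + 1) = dP q r j * ((q : ℂ) ^ r - (q : ℂ) ^ j) := by
  simp [dP, prod_range_succ]

lemma aP_succ (q : ℝ) (z : ℂ) (j : ℕ) :
    aP q z (j + 1) = aP q z j * (((q : ℂ) ^ (-(j : ℤ)) - z) / ((q : ℂ) ^ (j + 1) - 1)) := by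
  simp only [aP, prod_range_succ]

lemma dP_shift (q : ℝ) (r j : ℕ) :
    dP q (r + 1) (j + 1) = (q : ℂ) ^ j * ((q : ℂ) ^ (r + 1) - 1) * dP q r j := by
  induction j with
  | zero => simp [dP]
  | succ j ih =>
    rw [dP_succ, ih, dP_succ]
    ring

lemma qpow_sub_one_ne (q : ℝ) (hq : 1 < q) (m : ℕ) : ((q : ℂ) ^ (m + 1) - 1) ≠ 0 := by
  have h : (1 : ℝ) < q ^ (m + 1) := one_lt_pow₀ hq (Nat.succ_ne_zero m)
  have : ((q : ℂ) ^ (m + 1) - 1) = ((q ^ (m + 1) - 1 : ℝ) : ℂ) := by push_cast; ring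
  rw [this]
  exact_mod_cast sub_ne_zero.mpr (ne_of_gt h)

lemma qne (q : ℝ) (hq : 1 < q) : (q : ℂ) ≠ 0 := by
  exact_mod_cast ne_of_gt (lt_trans one_pos hq)

lemma pointwise (q : ℝ) (hq : 1 < q) (z : ℂ) (r j : ℕ) (hj : j ≤ r) :
    z ^ (r - j) * aP q z (j + 1) * dP q (r + 1) (j + 1)
      = (sP q z r (j + 1) - sP q z r j) + tP q z r j := by
  have hq0 := qne q hq
  have hpj : ((q : ℂ) ^ j) ≠ 0 := pow_ne_zero _ hq0
  have hd := qpow_sub_one_ne q hq j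
  rw [dP_shift]
  rcases eq_or_lt_of_le hj with rfl | hlt
  · simp only [sP, tP, dP_succ, aP_succ, Nat.sub_self]
    have h0 : j - (j + 1) = 0 := by omega
    rw [h0, zpow_neg, zpow_natCast]
    field_simp
    ring
  · obtain ⟨k, rfl⟩ : ∃ k, r = j + (k + 1) := ⟨r - j - 1, by omega⟩
    simp only [sP, tP, dP_succ, aP_succ]
    have h1 : j + (k + 1) - j = k + 1 := by omega
    have h2 : j + (k + 1) - (j + 1) = k := by omega
    rw [h1, h2, zpow_neg, zpow_natCast]
    field_simp
    ring

lemma key (q : ℝ) (hq : 1 < q) (z : ℂ) (r : ℕ) :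
    ∑ j ∈ range (r + 1), z ^ (r - j) * aP q z j * dP q r j = 1 := by
  induction r with
  | zero => simp [aP, dP]
  | succ r ih =>
    rw [Finset.sum_range_succ']
    have h0 : z ^ (r + 1 - 0) * aP q z 0 * dP q (r + 1) 0 = z ^ (r + 1) := by simp [aP, dP]
    rw [h0]
    have hsum : ∑ j ∈ range (r + 1), z ^ (r + 1 - (j + 1)) * aP q z (j + 1) * dP q (r + 1) (j + 1)
        = ∑ j ∈ range (r + 1), ((sP q z r (j + 1) - sP q z r j) + tP q z r j) := by
      refine Finset.sum_congr rfl fun j hj => ?_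
      have hj' : j ≤ r := Nat.lt_succ_iff.mp (Finset.mem_range.mp hj)
      rw [Nat.succ_sub_succ]
      exact pointwise q hq z r j hj'
    rw [hsum, Finset.sum_add_distrib, Finset.sum_range_sub (fun j => sP q z r j)]
    have hS : sP q z r (r + 1) = 0 := by simp [sP, tP, dP_succ]
    have hS0 : sP q z r 0 = z ^ (r + 1) := by
      simp [sP, tP, aP, dP, pow_succ, mul_comm]
    have hT : ∑ j ∈ range (r + 1), tP q z r j = 1 := by simpa only [tP] using ih
    rw [hS, hS0, hT]
    ring

theorem f_z_expansion (q : ℝ) (hq : 1 < q) (n r : ℕ) (hr : r ≤ n) (z : ℂ) :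
    z ^ (n - r) =
      ∑ j ∈ Finset.range (n + 1),
        (z ^ (n - j) * ∏ i ∈ Finset.range j,
            ((q : ℂ) ^ (-(i : ℤ)) - z) / ((q : ℂ) ^ (i + 1) - 1)) *
          ∏ i ∈ Finset.range j, ((q : ℂ) ^ r - (q : ℂ) ^ i) := by
  have main : z ^ (n - r) = ∑ j ∈ range (n + 1), z ^ (n - j) * aP q z j * dP q r j := by
    calc z ^ (n - r)
        = z ^ (n - r) * ∑ j ∈ range (r + 1), z ^ (r - j) * aP q z j * dP q r j := by
          rw [key q hq z r, mul_one]
      _ = ∑ j ∈ range (r + 1), z ^ (n - j) * aP q z j * dP q r j := by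
          rw [Finset.mul_sum]
          refine Finset.sum_congr rfl fun j hj => ?_
          have hj' : j ≤ r := Nat.lt_succ_iff.mp (Finset.mem_range.mp hj)
          have hnj : n - j = (n - r) + (r - j) := by omega
          rw [hnj, pow_add]
          ring
      _ = ∑ j ∈ range (n + 1), z ^ (n - j) * aP q z j * dP q r j := by
          apply Finset.sum_subset (Finset.range_subset_range.mpr (by omega))
          intro j hj hj'
          have hrj : r < j := by
            simp only [Finset.mem_range] at hj hj'
            omega
          have hdz : dP q r j = 0 :=
            Finset.prod_eq_zero (Finset.mem_range.mpr hrj) (sub_self _)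
          rw [hdz, mul_zero]
  simpa only [aP, dP, mul_assoc] using main
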